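/- arXiv:1803.10949 — 6 statements merged into one kernel-verified Lean document; each statement's English description precedes it below -/
import Mathlib

section
/- Let F be a real closed field and let L = F × K where K = F[√-1]. Define the adjoint map ♯ : L → L by (b,c)♯ = (c·ι(c), b·ι(c)), where ι is the nontrivial F-automorphism of K. Then for every invertible element λ ∈ L, there exists an invertible element ℓ ∈ L such that ℓ⁻¹ · ℓ♯ = λ. -/
/-- The adjoint map on the cubic étale algebra `L = F × K`,
`(b, c)♯ = (c·ι(c), b·ι(c))`, where `c·ι(c)` is recorded via the norm map. -/
def sharpFK {F K : Type*} [Field F] [Field K] [Algebra F K]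
    (ι : K ≃ₐ[F] K) (norm : K → F) (p : F × K) : F × K :=
  (norm p.2, algebraMap F K p.1 * ι p.2)

/-- Over a real closed field `F` with `K = F[√-1]` and `L = F × K`, every unit
`λ` of `L` is of the form `ℓ⁻¹ · ℓ♯` for some unit `ℓ` of `L`. -/
theorem stmt_0 (F K : Type*) [Field F] [LinearOrder F] [IsStrictOrderedRing F] [Field K] [Algebra F K]
    [IsAlgClosed K]
    (hsq : ∀ x : F, 0 ≤ x → IsSquare x)
    (ι : K ≃ₐ[F] K) (hι2 : ∀ c, ι (ι c) = c) (hι1 : ι ≠ AlgEquiv.refl)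
    (i : K) (hi : i ^ 2 = -1)
    (hgen : ∀ c : K, ∃ x y : F, c = algebraMap F K x + algebraMap F K y * i)
    (norm : K → F) (hnorm : ∀ c, algebraMap F K (norm c) = c * ι c)
    (lam : F × K) (hlam : IsUnit lam) :
    ∃ ℓ : F × K, IsUnit ℓ ∧ Ring.inverse ℓ * sharpFK ι norm ℓ = lam := by
  obtain ⟨u, hu⟩ := hlam
  have huu : lam * ↑u⁻¹ = 1 := by rw [← hu]; exact u.mul_inv
  have hl1 : lam.1 ≠ 0 := by
    intro h
    have h' := congrArg Prod.fst huu
    simp [Prod.fst_mul, h] at h'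
  have hl2 : lam.2 ≠ 0 := by
    intro h
    have h' := congrArg Prod.snd huu
    simp [Prod.snd_mul, h] at h'
  have hinj : Function.Injective (algebraMap F K) := (algebraMap F K).injective
  have hi0 : i ≠ 0 := by
    intro h
    rw [h] at hi
    simp at hi
  have hιi : ι i = -i := by
    have hsq' : ι i ^ 2 = -1 := by rw [← map_pow, hi, map_neg, map_one]
    have h : (ι i - i) * (ι i + i) = 0 := by linear_combination hsq' - hi
    rcases mul_eq_zero.mp h with h' | h'
    · exfalso
      apply hι1
      have hii : ι i = i := by linear_combination h'
      ext c
      obtain ⟨x, y, rfl⟩ := hgen c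
      simp [hii]
    · linear_combination h'
  have hfix : ∀ z : K, ι z = z → ∃ x : F, algebraMap F K x = z := by
    intro z hz
    obtain ⟨x, y, rfl⟩ := hgen z
    refine ⟨x, ?_⟩
    have h2 : (2 : K) ≠ 0 := by
      intro h
      apply (two_ne_zero : (2 : F) ≠ 0)
      apply hinj
      rw [map_ofNat, h, map_zero]
    have hy : algebraMap F K y = 0 := by
      have h1 : ι (algebraMap F K x + algebraMap F K y * i)
          = algebraMap F K x - algebraMap F K y * i := by
        rw [map_add, map_mul, AlgEquiv.commutes, AlgEquiv.commutes, hιi]; ring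
      rw [h1] at hz
      have h3 : algebraMap F K y * i * 2 = 0 := by linear_combination -hz
      rcases mul_eq_zero.mp h3 with h | h
      · rcases mul_eq_zero.mp h with h | h
        · exact h
        · exact absurd h hi0
      · exact absurd h h2
    rw [hy, zero_mul, add_zero]
  obtain ⟨d, hd⟩ := IsAlgClosed.exists_pow_nat_eq (algebraMap F K lam.1 * lam.2)
    (n := 2) (by norm_num)
  have hd0 : d ≠ 0 := by
    intro h
    rw [h, zero_pow (by norm_num : (2:ℕ) ≠ 0)] at hd
    rcases (mul_eq_zero.mp hd.symm) with h' | h'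
    · exact hl1 (hinj (by rw [h', map_zero]))
    · exact hl2 h'
  set c := ι d with hcdef
  have hιc : ι c = d := hι2 d
  have hc0 : c ≠ 0 := by
    intro h
    apply hd0
    rw [← hιc, h, map_zero]
  have hc2 : c ^ 2 = algebraMap F K lam.1 * ι lam.2 := by
    rw [hcdef, ← map_pow, hd, map_mul, AlgEquiv.commutes]
  have key : ι (c * lam.2 / d) = c * lam.2 / d := by
    rw [map_div₀, map_mul, hιc, ← hcdef, div_eq_div_iff hc0 hd0]
    linear_combination ι lam.2 * hd - lam.2 * hc2
  obtain ⟨b, hb⟩ := hfix _ key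
  have hb0 : b ≠ 0 := by
    intro h
    rw [h, map_zero] at hb
    rw [eq_div_iff hd0, zero_mul] at hb
    rcases mul_eq_zero.mp hb.symm with h' | h'
    · exact hc0 h'
    · exact hl2 h'
  have hunit : IsUnit ((b, c) : F × K) :=
    IsUnit.of_mul_eq_one ((b⁻¹, c⁻¹) : F × K)
      (Prod.ext (mul_inv_cancel₀ hb0) (mul_inv_cancel₀ hc0))
  refine ⟨(b, c), hunit, ?_⟩
  have hmul : sharpFK ι norm (b, c) = (b, c) * lam := by
    unfold sharpFK
    have e1 : norm c = b * lam.1 := by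
      apply hinj
      rw [hnorm, hιc, map_mul, hb, div_mul_eq_mul_div, eq_comm, div_eq_iff hd0]
      linear_combination -c * hd
    have e2 : algebraMap F K b * ι c = c * lam.2 := by
      rw [hb, hιc]
      exact div_mul_cancel₀ _ hd0
    exact Prod.ext e1 e2
  rw [hmul, ← mul_assoc, Ring.inverse_mul_cancel _ hunit, one_mul]
end

section
/- Let C be a Cayley (octonion) algebra over a field F of characteristic ≠ 2, with norm n, and let C⁰ = {x ∈ C : n(x,1) = 0}. For x ∈ C⁰, the triple (Lₓ, −Tₓ, Rₓ) belongs to the triality Lie algebra tri(C) of the associated para-Cayley algebra, i.e., Lₓ(u • v) = −Tₓ(u) • v + u • Rₓ(v) for all u, v ∈ C, where Lₓ, Rₓ are left and right multiplication in C and Tₓ = Lₓ + Rₓ. -/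
open QuadraticMap

/-- In a Cayley algebra `C` over a field of characteristic `≠ 2`, for any
trace-zero element `x` the triple `(Lₓ, −Tₓ, Rₓ)` belongs to the triality Lie
algebra of the associated para-Cayley algebra: each of `Lₓ`, `Tₓ`, `Rₓ` is
skew-symmetric with respect to the polar form of the norm, and
`Lₓ(u • v) = (−Tₓ u) • v + u • (Rₓ v)` for all `u, v`. -/
theorem stmt_7 (F : Type*) [Field F] (C : Type*) [NonAssocRing C] [Module F C]
    [SMulCommClass F C C] [IsScalarTower F C C] [FiniteDimensional F C]
    (h2 : (2 : F) ≠ 0)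
    (n : QuadraticForm F C) (hdim : Module.finrank F C = 8)
    (hcomp : ∀ x y : C, n (x * y) = n x * n y)
    (hnd : ∀ x : C, (∀ y : C, polar n x y = 0) → x = 0)
    (x : C) (hx : polar n x 1 = 0) :
    let conj : C → C := fun z => polar n z 1 • (1 : C) - z
    (∀ u v : C, polar n (x * u) v + polar n u (x * v) = 0) ∧
    (∀ u v : C, polar n (x * u + u * x) v + polar n u (x * v + v * x) = 0) ∧
    (∀ u v : C, polar n (u * x) v + polar n u (v * x) = 0) ∧
    (∀ u v : C,
      x * (conj u * conj v) = conj (-(x * u + u * x)) * conj v + conj u * conj (v * x)) := by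
  intro conj
  -- scaling identities obtained by polarizing the composition law
  have hsl : ∀ a c d : C, polar n (a * c) (a * d) = n a * polar n c d := by
    intro a c d
    simp only [polar, ← mul_add, hcomp]
    ring
  have hn : ∀ u v : C, n (u + v) = n u + n v + polar n u v := by
    intro u v; simp only [polar]; ring
  -- full linearization
  have hlin : ∀ a b c d : C, polar n (a * c) (b * d) + polar n (a * d) (b * c)
      = polar n a b * polar n c d := by
    intro a b c d
    have e := hsl (a + b) c d
    rw [add_mul, add_mul, polar_add_left, polar_add_right, polar_add_right, hn,
      hsl a c d, hsl b c d] at e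
    linear_combination e - polar_comm (⇑n) (b * c) (a * d)
  -- adjoint identities
  have hA : ∀ u v w : C, polar n (u * v) w
      = polar n u 1 * polar n v w - polar n v (u * w) := by
    intro u v w
    have e := hlin u 1 v w
    rw [one_mul, one_mul] at e
    linear_combination e - polar_comm (⇑n) (u * w) v
  have hB : ∀ u v w : C, polar n (u * v) w
      = polar n v 1 * polar n u w - polar n u (w * v) := by
    intro u v w
    have e := hlin u w v 1
    rw [mul_one, mul_one] at e
    linear_combination e
  -- extensionality from nondegeneracy
  have hext : ∀ a b : C, (∀ w : C, polar n a w = polar n b w) → a = b := by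
    intro a b h
    have h0 : ∀ w : C, polar n (a - b) w = 0 := fun w => by
      rw [polar_sub_left, h w, sub_self]
    exact sub_eq_zero.mp (hnd _ h0)
  -- generic Cayley-Hamilton identity
  have hCH : ∀ y : C, y * y = polar n y 1 • y - n y • (1 : C) := by
    intro y
    apply hext
    intro w
    have e1 := hA y y w
    have e2 : polar n (y * 1) (y * w) = n y * polar n 1 w := hsl y 1 w
    rw [mul_one] at e2
    rw [polar_sub_left, polar_smul_left, polar_smul_left, smul_eq_mul, smul_eq_mul]
    linear_combination e1 - e2
  have hCH2 : ∀ u v : C, u * v + v * u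
      = polar n u 1 • v + polar n v 1 • u - polar n u v • (1 : C) := by
    intro u v
    have e := hCH (u + v)
    simp only [mul_add, add_mul] at e
    rw [polar_add_left, hn, hCH u, hCH v] at e
    linear_combination (norm := module) e
  -- trace of a product
  have ht : ∀ u v : C, polar n (u * v) 1 = polar n u 1 * polar n v 1 - polar n u v := by
    intro u v
    have e := hA u v 1
    rw [mul_one] at e
    linear_combination e - polar_comm (⇑n) v u
  -- left alternativity
  have halt1 : ∀ y z : C, y * (y * z) = polar n y 1 • (y * z) - n y • z := by
    intro y z
    apply hext
    intro w
    have e1 := hA y (y * z) w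
    have e2 := hsl y z w
    rw [polar_sub_left, polar_smul_left, polar_smul_left, smul_eq_mul, smul_eq_mul]
    linear_combination e1 - e2
  have halt2 : ∀ y z : C, y * (y * z) = (y * y) * z := by
    intro y z
    rw [halt1 y z, hCH y, sub_mul, smul_mul_assoc, smul_mul_assoc, one_mul]
  -- linearized left alternativity
  have hAlt : ∀ a b z : C, a * (b * z) + b * (a * z) = (a * b) * z + (b * a) * z := by
    intro a b z
    have e := halt2 (a + b) z
    simp only [add_mul, mul_add] at e
    rw [halt2 a z, halt2 b z] at e
    linear_combination (norm := module) e
  -- the conjugation is an anti-homomorphism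
  have hconj : ∀ u v : C, conj (u * v) = conj v * conj u := by
    intro u v
    show polar n (u * v) 1 • (1 : C) - u * v
      = (polar n v 1 • (1 : C) - v) * (polar n u 1 • (1 : C) - u)
    rw [ht u v]
    have e := hCH2 u v
    simp only [sub_mul, mul_sub, smul_mul_assoc, mul_smul_comm, one_mul, mul_one, smul_smul]
    linear_combination (norm := module) -e
  have hconjx : conj x = -x := by
    show polar n x 1 • (1 : C) - x = -x
    rw [hx, zero_smul, zero_sub]
  have hconjneg : ∀ z : C, conj (-z) = -conj z := by
    intro z
    show polar n (-z) 1 • (1 : C) - (-z) = -(polar n z 1 • (1 : C) - z)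
    rw [polar_neg_left]
    module
  have hconjadd : ∀ z w : C, conj (z + w) = conj z + conj w := by
    intro z w
    show polar n (z + w) 1 • (1 : C) - (z + w)
      = (polar n z 1 • (1 : C) - z) + (polar n w 1 • (1 : C) - w)
    rw [polar_add_left]
    module
  have g1 : ∀ u v : C, polar n (x * u) v + polar n u (x * v) = 0 := by
    intro u v
    linear_combination hA x u v + polar n u v * hx
  have g3 : ∀ u v : C, polar n (u * x) v + polar n u (v * x) = 0 := by
    intro u v
    linear_combination hB u x v + polar n u v * hx
  refine ⟨g1, ?_, g3, ?_⟩
  · intro u v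
    rw [polar_add_left, polar_add_right]
    linear_combination g1 u v + g3 u v
  · intro u v
    rw [hconjneg, hconjadd, hconj x u, hconj u x, hconj v x, hconjx]
    simp only [mul_neg, neg_mul, neg_add, neg_neg]
    rw [add_mul]
    linear_combination (norm := module) hAlt x (conj u) (conj v)
end

section
/- Let (S, ⋆, n) be a symmetric composition algebra over F and let L = F × F × F with ρ the cyclic shift ρ(ℓ₁,ℓ₂,ℓ₃) = (ℓ₂,ℓ₃,ℓ₁). Define on V = S × S × S the L-valued quadratic form Q = (n,n,n) and the product (x₁,x₂,x₃) * (y₁,y₂,y₃) = (x₂⋆y₃, x₃⋆y₁, x₁⋆y₂). Then Q(x*y) = ρ(Q(x))·ρ²(Q(y)) and b_Q(x*y, z) = ρ(b_Q(y*z, x)) for all x, y, z ∈ V, so (V, L, ρ, *, Q) is a cyclic composition. -/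
open QuadraticMap

/-- Let `(S, ⋆, n)` be a symmetric composition algebra over `F` and let
`L = F × F × F` with cyclic shift `ρ`.  On `V = S × S × S` with
`Q = (n, n, n)` and `(x₁,x₂,x₃) * (y₁,y₂,y₃) = (x₂⋆y₃, x₃⋆y₁, x₁⋆y₂)`,
one has `Q(x*y) = ρ(Q x)·ρ²(Q y)` and `b_Q(x*y, z) = ρ(b_Q(y*z, x))`,
so `(V, L, ρ, *, Q)` is a cyclic composition. -/
theorem stmt_11 (F : Type*) [Field F] (S : Type*) [AddCommGroup S] [Module F S]
    [FiniteDimensional F S]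
    (mul : S →ₗ[F] S →ₗ[F] S) (n : QuadraticForm F S)
    (hcomp : ∀ x y : S, n (mul x y) = n x * n y)
    (hnd : ∀ x : S, (∀ y : S, polar n x y = 0) → x = 0)
    (hassoc : ∀ x y z : S, polar n (mul x y) z = polar n x (mul y z)) :
    let ρ : F × F × F → F × F × F := fun l => (l.2.1, l.2.2, l.1)
    let Q : S × S × S → F × F × F := fun x => (n x.1, n x.2.1, n x.2.2)
    let bQ : S × S × S → S × S × S → F × F × F := fun x y =>
      (polar n x.1 y.1, polar n x.2.1 y.2.1, polar n x.2.2 y.2.2)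
    let star : S × S × S → S × S × S → S × S × S := fun x y =>
      (mul x.2.1 y.2.2, mul x.2.2 y.1, mul x.1 y.2.1)
    (∀ x y : S × S × S, Q (star x y) = ρ (Q x) * ρ (ρ (Q y))) ∧
    (∀ x y z : S × S × S, bQ (star x y) z = ρ (bQ (star y z) x)) := by
  intro ρ Q bQ star
  constructor
  · intro x y
    simp [ρ, Q, star, Prod.mul_def, hcomp]
  · intro x y z
    have key : ∀ a b c : S, polar n (mul a b) c = polar n (mul b c) a := fun a b c => by
      rw [hassoc, polar_comm]
    simp only [ρ, bQ, star, Prod.ext_iff]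
    exact ⟨key _ _ _, key _ _ _, key _ _ _⟩
end

section
/- Any cyclic composition (V, L, ρ, *, Q) satisfies the identities (x*y)*x = ρ²(Q(x))·y and x*(y*x) = ρ(Q(x))·y for all x, y ∈ V. -/
open QuadraticMap

/-- Any cyclic composition `(V, L, ρ, *, Q)` over a cubic Galois `F`-algebra
`L` satisfies `(x*y)*x = ρ²(Q(x))·y` and `x*(y*x) = ρ(Q(x))·y`. -/
theorem stmt_12 (F : Type*) [Field F] (L : Type*) [CommRing L] [Algebra F L]
    (ρ : L ≃ₐ[F] L) (hρ3 : ∀ ℓ : L, ρ (ρ (ρ ℓ)) = ℓ)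
    (hfix : ∀ ℓ : L, ρ ℓ = ℓ → ∃ a : F, algebraMap F L a = ℓ)
    (hdim : Module.finrank F L = 3)
    (V : Type*) [AddCommGroup V] [Module L V] [Module.Free L V]
    (Q : QuadraticMap L V L)
    (hQnd : ∀ v : V, (∀ w : V, polar Q v w = 0) → v = 0)
    (star : V → V → V)
    (hadd1 : ∀ x y z : V, star (x + y) z = star x z + star y z)
    (hadd2 : ∀ x y z : V, star x (y + z) = star x y + star x z)
    (hsl1 : ∀ (ℓ : L) (x y : V), star (ℓ • x) y = ρ ℓ • star x y)
    (hsl2 : ∀ (ℓ : L) (x y : V), star x (ℓ • y) = ρ (ρ ℓ) • star x y)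
    (hQmul : ∀ x y : V, Q (star x y) = ρ (Q x) * ρ (ρ (Q y)))
    (hb : ∀ x y z : V,
      polar Q (star x y) z = ρ (polar Q (star y z) x) ∧
      polar Q (star x y) z = ρ (ρ (polar Q (star z x) y))) :
    ∀ x y : V, star (star x y) x = ρ (ρ (Q x)) • y ∧
      star x (star y x) = ρ (Q x) • y := by
  -- linearization of hQmul in the second argument
  have hA : ∀ x y z : V,
      polar Q (star x y) (star x z) = ρ (Q x) * ρ (ρ (polar Q y z)) := by
    intro x y z
    have h : star x y + star x z = star x (y + z) := (hadd2 x y z).symm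
    simp only [polar, h, hQmul, map_add, _root_.map_sub, _root_.map_neg]
    ring
  -- linearization of hQmul in the first argument
  have hB : ∀ x y z : V,
      polar Q (star y x) (star z x) = ρ (polar Q y z) * ρ (ρ (Q x)) := by
    intro x y z
    have h : star y x + star z x = star (y + z) x := (hadd1 y z x).symm
    simp only [polar, h, hQmul, map_add, _root_.map_sub, _root_.map_neg]
    ring
  intro x y
  constructor
  · have key : ∀ z : V,
        polar Q (star (star x y) x - ρ (ρ (Q x)) • y) z = 0 := by
      intro z
      rw [polar_sub_left, polar_smul_left, sub_eq_zero]
      have h1 := (hb (star x y) x z).1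
      rw [h1, polar_comm, hA, map_mul, hρ3, polar_comm, smul_eq_mul]
    have := hQnd _ key
    rwa [sub_eq_zero] at this
  · have key : ∀ z : V,
        polar Q (star x (star y x) - ρ (Q x) • y) z = 0 := by
      intro z
      rw [polar_sub_left, polar_smul_left, sub_eq_zero]
      have h2 := (hb x (star y x) z).2
      rw [h2, hB, map_mul, map_mul, hρ3, hρ3, mul_comm, smul_eq_mul, polar_comm]
    have := hQnd _ key
    rwa [sub_eq_zero] at this
end

section
/- Let (V, L, β, Q) be a twisted composition over a cubic étale F-algebra L, and let λ, μ ∈ L^×. Then β̃(v) := λ·β(v) and Q̃(v) := μ·Q(v) define a twisted composition (V, L, β̃, Q̃) if and only if μ = λ♯. -/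
open QuadraticMap

universe u

section helpers

variable {F : Type u} [Field F] {L : Type u} [CommRing L] [Algebra F L]

lemma tc_two_cancel (h2 : (2 : F) ≠ 0) {M : Type*} [AddCommGroup M] [Module F M]
    {z : M} (h : z + z = 0) : z = 0 := by
  have h' : (2 : F) • z = 0 := by rw [two_smul]; exact h
  rcases smul_eq_zero.mp h' with h'' | h''
  · exact absurd h'' h2
  · exact h''

lemma tc_keyU (h2 : (2 : F) ≠ 0) (d : L → L) (p : L → L → L)
    (hpc : ∀ x y, p x y = p y x)
    (hpn : ∀ x y, p x (-y) = - p x y)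
    (hda : ∀ x y, d (x + y) = d x + d y + p x y)
    (hdn : ∀ x, d (-x) = d x)
    (h0 : ∀ m, m * d m = 0) : ∀ m, d m = 0 := by
  have key : ∀ x y, x * d y + y * p x y = 0 := by
    intro x y
    have e1 : (x + y) * (d x + d y + p x y) = 0 := by rw [← hda]; exact h0 _
    have e2 : (x + -y) * (d x + d y + - p x y) = 0 := by
      rw [← hpn, ← hdn y, ← hda]; exact h0 _
    have hx := h0 x
    apply tc_two_cancel h2 (M := L)
    linear_combination e1 + e2 - 2 * hx
  have hd1 : d 1 = 0 := by have := h0 1; rwa [one_mul] at this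
  have hp1 : ∀ x, p x 1 = 0 := by
    intro x
    have := key x 1
    rwa [hd1, mul_zero, zero_add, one_mul] at this
  intro m
  have := key 1 m
  rwa [one_mul, hpc, hp1, mul_zero, add_zero] at this

lemma tc_sharp_mul (h2 : (2 : F) ≠ 0) (sharp : QuadraticMap F L L)
    (hsharp : ∀ ℓ : L, ℓ * sharp ℓ = algebraMap F L (Algebra.norm F ℓ))
    {u : L} (hu : IsUnit u) (m : L) :
    sharp (u * m) = sharp u * sharp m := by
  have key : ∀ m : L, u * sharp (u * m) - algebraMap F L (Algebra.norm F u) * sharp m = 0 := by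
    apply tc_keyU h2 _ (fun x y => u * polar sharp (u * x) (u * y)
      - algebraMap F L (Algebra.norm F u) * polar sharp x y)
    · intro x y; rw [polar_comm sharp (u*x), polar_comm sharp x]
    · intro x y
      rw [mul_neg, polar_neg_right, polar_neg_right]; ring
    · intro x y
      have h1 : sharp (u * x + u * y) = sharp (u*x) + sharp (u*y) + polar sharp (u*x) (u*y) := by
        simp [QuadraticMap.polar]
      have h2' : sharp (x + y) = sharp x + sharp y + polar sharp x y := by
        simp [QuadraticMap.polar]
      rw [mul_add, h1, h2']; ring
    · intro x; rw [mul_neg, QuadraticMap.map_neg, QuadraticMap.map_neg]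
    · intro m
      have h1 := hsharp (u * m)
      have h2' := hsharp m
      have h3 : algebraMap F L (Algebra.norm F (u * m))
          = algebraMap F L (Algebra.norm F u) * algebraMap F L (Algebra.norm F m) := by
        rw [map_mul, map_mul]
      linear_combination h1 - algebraMap F L (Algebra.norm F u) * h2' + h3
  have hk := key m
  apply hu.mul_left_cancel
  rw [sub_eq_zero] at hk
  rw [hk, ← mul_assoc, hsharp u]

lemma tc_idem [Nontrivial L] (h2 : (2 : F) ≠ 0)
    (sharp : QuadraticMap F L L)
    (hsharp : ∀ ℓ : L, ℓ * sharp ℓ = algebraMap F L (Algebra.norm F ℓ))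
    {e : L} (hee : e * e = e) (he0 : e ≠ 0) (he1 : e ≠ 1) :
    ∃ g : L, g * g = g ∧ g ≠ 1 ∧ sharp g = 1 - g := by
  have hs1 : sharp 1 = 1 := by
    have h := hsharp 1
    rw [one_mul] at h
    rw [h]
    simp
  have hann : ∀ x : L, x * x = x → x ≠ 1 → x * sharp x = 0 := by
    intro x hxx hx1
    have h1 := hsharp x
    have hN2 : Algebra.norm F x * Algebra.norm F x = Algebra.norm F x := by
      have := congrArg (Algebra.norm F) hxx; rwa [map_mul] at this
    have hcases : Algebra.norm F x = 0 ∨ Algebra.norm F x = 1 := by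
      rcases mul_eq_zero.mp (show Algebra.norm F x * (Algebra.norm F x - 1) = 0 by
        linear_combination hN2) with h | h
      · exact Or.inl h
      · exact Or.inr (by linear_combination h)
    rcases hcases with h | h
    · rw [h1, h, map_zero]
    · exfalso
      have hu : IsUnit x := IsUnit.of_mul_eq_one (sharp x) (by rw [h1, h, map_one])
      exact hx1 (hu.mul_left_cancel (by rw [hxx, mul_one]))
  have hf : ((1 : L) - e) * ((1 : L) - e) = 1 - e := by linear_combination hee
  have hf1 : (1 : L) - e ≠ 1 := fun h => he0 (by linear_combination -h)
  have hf0 : (1 : L) - e ≠ 0 := fun h => he1 (by linear_combination -h)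
  have hNe := hann e hee he1
  have hNf := hann ((1 : L) - e) hf hf1
  have huu : (e - ((1:L) - e)) * (e - ((1:L) - e)) = 1 := by linear_combination 4 * hee
  have hNu1 : Algebra.norm F (e - ((1:L) - e)) * Algebra.norm F (e - ((1:L) - e)) = 1 := by
    have := congrArg (Algebra.norm F) huu; rwa [map_mul, map_one] at this
  have hsu : sharp (e - ((1:L) - e))
      = algebraMap F L (Algebra.norm F (e - ((1:L) - e))) * (e - ((1:L) - e)) := by
    have h1 := hsharp (e - ((1:L) - e))
    calc sharp (e - ((1:L) - e))
        = ((e - ((1:L)-e)) * (e - ((1:L)-e))) * sharp (e - ((1:L)-e)) := by rw [huu, one_mul]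
      _ = (e - ((1:L)-e)) * ((e - ((1:L)-e)) * sharp (e - ((1:L)-e))) := by ring
      _ = (e - ((1:L)-e)) * algebraMap F L (Algebra.norm F (e - ((1:L)-e))) := by rw [h1]
      _ = algebraMap F L (Algebra.norm F (e - ((1:L)-e))) * (e - ((1:L)-e)) := by ring
  have hA : sharp e + sharp ((1:L) - e) + polar sharp e ((1:L) - e) = 1 := by
    have hd : polar sharp e ((1:L) - e) = sharp (e + ((1:L) - e)) - sharp e - sharp ((1:L) - e) := rfl
    have h1 : e + ((1:L) - e) = 1 := by ring
    rw [hd, h1, hs1]; ring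
  have hB : sharp e + sharp ((1:L) - e) - polar sharp e ((1:L) - e)
      = algebraMap F L (Algebra.norm F (e - ((1:L) - e))) * (e - ((1:L) - e)) := by
    have hd : polar sharp e (-((1:L) - e))
        = sharp (e + -((1:L) - e)) - sharp e - sharp (-((1:L) - e)) := rfl
    rw [QuadraticMap.map_neg, polar_neg_right] at hd
    have h1 : e + -((1:L) - e) = e - ((1:L) - e) := by ring
    rw [h1] at hd
    rw [← hsu]
    linear_combination hd
  have hcase : Algebra.norm F (e - ((1:L) - e)) = 1 ∨ Algebra.norm F (e - ((1:L) - e)) = -1 := by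
    rcases mul_eq_zero.mp (show (Algebra.norm F (e - ((1:L)-e)) - 1)
        * (Algebra.norm F (e - ((1:L)-e)) + 1) = 0 by linear_combination hNu1) with h | h
    · exact Or.inl (by linear_combination h)
    · exact Or.inr (by linear_combination h)
  rcases hcase with hn | hn
  · have hsum : sharp e + sharp ((1:L) - e) = e := by
      rw [hn, map_one, one_mul] at hB
      have hz : (sharp e + sharp ((1:L) - e) - e) + (sharp e + sharp ((1:L) - e) - e) = 0 := by
        linear_combination hA + hB
      have := tc_two_cancel h2 (M := L) hz
      linear_combination this
    refine ⟨(1:L) - e, hf, hf1, ?_⟩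
    have hx : sharp ((1:L) - e) = e := by linear_combination e * hsum - hNe + hNf + hee
    rw [hx]; ring
  · have hsum : sharp e + sharp ((1:L) - e) = 1 - e := by
      have hm1 : algebraMap F L (-1 : F) = -1 := by simp
      rw [hn, hm1] at hB
      have hz : (sharp e + sharp ((1:L) - e) - ((1:L) - e))
          + (sharp e + sharp ((1:L) - e) - ((1:L) - e)) = 0 := by
        linear_combination hA + hB
      have := tc_two_cancel h2 (M := L) hz
      linear_combination this
    exact ⟨e, hee, he1, by linear_combination ((1:L) - e) * hsum - hNf + hNe + hf⟩

end helpers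

lemma tc_exists_unit_Q {F : Type u} [Field F] {L : Type u} [CommRing L] [Algebra F L]
    [FiniteDimensional F L] [IsReduced L]
    (V : Type*) [AddCommGroup V] [Module L V] [Module.Free L V] [Nontrivial V]
    (Q : QuadraticMap L V L)
    (hQnd : ∀ v : V, (∀ w : V, polar Q v w = 0) → v = 0) :
    ∃ v : V, IsUnit (Q v) := by
  classical
  haveI : IsArtinianRing L := isArtinian_of_tower F inferInstance
  haveI : Finite {I : Ideal L | I.IsMaximal} := (IsArtinianRing.setOfPred_isMaximal_finite L).to_subtype
  haveI : Fintype {I : Ideal L | I.IsMaximal} := Fintype.ofFinite _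
  set ι := {I : Ideal L | I.IsMaximal}
  haveI : ∀ i : ι, Nontrivial (L ⧸ i.1) :=
    fun i => Ideal.Quotient.nontrivial_iff.mpr (Set.mem_setOf.mp i.2).ne_top
  let φ : L ≃+* ∀ I : ι, L ⧸ I.1 := (IsArtinianRing.equivPi L).toRingEquiv.trans
    (RingEquiv.piCongrLeft (fun I : MaximalSpectrum L => L ⧸ I.asIdeal)
      (⟨fun i => ⟨i.1, i.2⟩, fun I => ⟨I.asIdeal, I.isMaximal⟩, fun _ => rfl, fun _ => rfl⟩ :
        ι ≃ MaximalSpectrum L)).symm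
  let e : ι → L := fun i => φ.symm (Pi.single i 1)
  have he : ∀ i, φ (e i) = Pi.single i 1 := fun i => φ.apply_symm_apply _
  have hee : ∀ i, e i * e i = e i := by
    intro i
    apply φ.injective
    rw [map_mul, he]
    funext k
    by_cases h : k = i
    · subst h; simp
    · simp [Pi.single_apply, h]
  have heij : ∀ i j, i ≠ j → e i * e j = 0 := by
    intro i j hij
    apply φ.injective
    rw [map_mul, he, he, map_zero]
    funext k
    by_cases h : k = i
    · subst h; simp [Pi.single_apply, hij, Ne.symm hij]
    · simp [Pi.single_apply, h]
  obtain ⟨B⟩ := Module.Free.exists_basis (R := L) (M := V)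
  obtain ⟨κ, b⟩ := B
  have hκ : Nonempty κ := b.index_nonempty
  let k₀ := hκ.some
  have key : ∀ i : ι, ∃ v : V, φ (Q v) i ≠ 0 := by
    intro i
    by_contra hcon
    push_neg at hcon
    have hp : ∀ v w : V, φ (polar Q v w) i = 0 := by
      intro v w
      have hd : polar Q v w = Q (v + w) - Q v - Q w := rfl
      rw [hd, _root_.map_sub, _root_.map_sub]
      simp [hcon]
    have heb : e i • b k₀ ≠ 0 := by
      intro h
      have h1 : b.repr (e i • b k₀) k₀ = e i := by
        rw [_root_.map_smul, b.repr_self, Finsupp.smul_apply, Finsupp.single_eq_same,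
          smul_eq_mul, mul_one]
      rw [h, map_zero] at h1
      have h2 : φ (e i) = 0 := by rw [← h1]; simp
      rw [he] at h2
      have h3 := congrFun h2 i
      simp at h3
    apply heb
    apply hQnd
    intro w
    have h1 : polar Q (e i • b k₀) w = e i * polar Q (b k₀) w := by
      rw [polar_smul_left, smul_eq_mul]
    rw [h1]
    apply φ.injective
    rw [map_mul, map_zero, he]
    funext j
    by_cases h : j = i
    · subst h; simp [hp]
    · simp [Pi.single_apply, h]
  choose vv hvv using key
  refine ⟨∑ i : ι, e i • vv i, ?_⟩
  have hev : ∀ i : ι, e i • (∑ j : ι, e j • vv j) = e i • vv i := by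
    intro i
    rw [Finset.smul_sum, Finset.sum_eq_single i]
    · rw [smul_smul, hee]
    · intro j _ hj
      rw [smul_smul, heij i j (Ne.symm hj), zero_smul]
    · intro h; exact absurd (Finset.mem_univ i) h
  have hQi : ∀ i : ι, φ (Q (∑ j : ι, e j • vv j)) i = φ (Q (vv i)) i := by
    intro i
    have h1 : e i * Q (∑ j : ι, e j • vv j) = e i * Q (vv i) := by
      have l1 : Q (e i • (∑ j : ι, e j • vv j)) = (e i * e i) • Q (∑ j : ι, e j • vv j) :=
        QuadraticMap.map_smul _ _ _
      have l2 : Q (e i • vv i) = (e i * e i) • Q (vv i) := QuadraticMap.map_smul _ _ _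
      rw [hev i, l2, hee i] at l1
      rw [smul_eq_mul, smul_eq_mul] at l1
      exact l1.symm
    have h2 : φ (e i * Q (∑ j : ι, e j • vv j)) i = φ (e i * Q (vv i)) i := by rw [h1]
    rw [map_mul, map_mul, he] at h2
    simpa [Pi.mul_apply] using h2
  have hfield : ∀ i : ι, ∀ y : L ⧸ i.1, y ≠ 0 → ∃ z, y * z = 1 := by
    intro i
    have hf : IsField (L ⧸ i.1) :=
      (Ideal.Quotient.maximal_ideal_iff_isField_quotient i.1).mp (Set.mem_setOf.mp i.2)
    exact fun y hy => hf.mul_inv_cancel hy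
  have hxi : ∀ i, φ (Q (∑ j : ι, e j • vv j)) i ≠ 0 := fun i => by rw [hQi i]; exact hvv i
  choose z hz using fun i => hfield i (φ (Q (∑ j : ι, e j • vv j)) i) (hxi i)
  refine IsUnit.of_mul_eq_one (φ.symm z) ?_
  apply φ.injective
  rw [map_mul, φ.apply_symm_apply, map_one]
  funext i
  exact hz i

/-- Let `(V, L, β, Q)` be a twisted composition over a cubic étale `F`-algebra
`L` (with adjoint `♯`, the unique quadratic map with `ℓ·ℓ♯ = N(ℓ)`), and let
`λ, μ ∈ L^×`.  Then `β̃(v) = λ·β(v)` and `Q̃(v) = μ·Q(v)` define a twisted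
composition `(V, L, β̃, Q̃)` if and only if `μ = λ♯`. -/
theorem stmt_13 (F : Type u) [Field F] (h2 : (2 : F) ≠ 0)
    (L : Type u) [CommRing L] [Algebra F L] [Algebra.FormallyEtale F L]
    (hdim : Module.finrank F L = 3)
    (sharp : QuadraticMap F L L)
    (hsharp : ∀ ℓ : L, ℓ * sharp ℓ = algebraMap F L (Algebra.norm F ℓ))
    (V : Type*) [AddCommGroup V] [Module L V] [Module F V] [IsScalarTower F L V]
    [Module.Free L V] [Nontrivial V]
    (Q : QuadraticMap L V L)
    (hQnd : ∀ v : V, (∀ w : V, polar Q v w = 0) → v = 0)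
    (β : QuadraticMap F V V)
    (hβ : ∀ (ℓ : L) (v : V), β (ℓ • v) = sharp ℓ • β v)
    (hQβ : ∀ v : V, Q (β v) = sharp (Q v))
    (hN : ∀ v : V, ∃ a : F, polar Q v (β v) = algebraMap F L a)
    (lam mu : L) (hlam : IsUnit lam) (hmu : IsUnit mu) :
    ((∀ (ℓ : L) (v : V), lam • β (ℓ • v) = sharp ℓ • (lam • β v)) ∧
     (∀ v : V, mu * Q (lam • β v) = sharp (mu * Q v)) ∧
     (∀ v : V, ∃ a : F, mu * polar Q v (lam • β v) = algebraMap F L a)) ↔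
    mu = sharp lam := by
  haveI : FiniteDimensional F L := Module.finite_of_finrank_eq_succ hdim
  haveI : Nontrivial L := Module.nontrivial_of_finrank_eq_succ hdim
  haveI : IsReduced L := Algebra.FormallyUnramified.isReduced_of_field F L
  have hinj : Function.Injective (algebraMap F L) := (algebraMap F L).injective
  have hM : ∀ {u : L}, IsUnit u → ∀ m : L, sharp (u * m) = sharp u * sharp m :=
    fun hu m => tc_sharp_mul h2 sharp hsharp hu m
  have hs1 : sharp 1 = 1 := by
    have h := hsharp 1
    rw [one_mul] at h
    rw [h]; simp
  have hNu : ∀ {u : L}, IsUnit u → IsUnit (algebraMap F L (Algebra.norm F u)) :=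
    fun hu => (hu.map (Algebra.norm F)).map (algebraMap F L)
  have hsu : ∀ {u : L}, IsUnit u → IsUnit (sharp u) := by
    intro u hu
    have h : IsUnit (u * sharp u) := by rw [hsharp u]; exact hNu hu
    exact isUnit_of_mul_isUnit_right h
  have hss : ∀ {u : L}, IsUnit u → sharp (sharp u) = algebraMap F L (Algebra.norm F u) * u := by
    intro u hu
    have h1 := hsharp (sharp u)
    have hnz : (Algebra.norm F u) ≠ 0 := (hu.map (Algebra.norm F)).ne_zero
    have hn2 : Algebra.norm F (sharp u) = Algebra.norm F u * Algebra.norm F u := by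
      have h3 := congrArg (Algebra.norm F) (hsharp u)
      rw [map_mul, Algebra.norm_algebraMap, hdim] at h3
      -- h3 : N u * N (sharp u) = (N u)^3
      exact mul_left_cancel₀ hnz (h3.trans (show (Algebra.norm F u)^3
        = Algebra.norm F u * (Algebra.norm F u * Algebra.norm F u) by ring))
    -- from h1 : sharp u * sharp (sharp u) = algebraMap (N (sharp u))
    apply (hNu hu).mul_left_cancel
    calc algebraMap F L (Algebra.norm F u) * sharp (sharp u)
        = (u * sharp u) * sharp (sharp u) := by rw [hsharp u]
      _ = u * (sharp u * sharp (sharp u)) := by ring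
      _ = u * algebraMap F L (Algebra.norm F (sharp u)) := by rw [h1]
      _ = u * (algebraMap F L (Algebra.norm F u) * algebraMap F L (Algebra.norm F u)) := by
            rw [hn2, map_mul]
      _ = algebraMap F L (Algebra.norm F u) * (algebraMap F L (Algebra.norm F u) * u) := by ring
  constructor
  · -- forward
    rintro ⟨-, h2c, h3c⟩
    obtain ⟨v₀, hv₀⟩ := tc_exists_unit_Q (F := F) V Q hQnd
    have hsQv₀ : IsUnit (sharp (Q v₀)) := hsu hv₀
    have hkey : sharp mu = mu * (lam * lam) := by
      have h := h2c v₀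
      rw [QuadraticMap.map_smul, smul_eq_mul, hQβ, hM hmu] at h
      have h' : sharp (Q v₀) * sharp mu = sharp (Q v₀) * (mu * (lam * lam)) := by
        linear_combination - h
      exact hsQv₀.mul_left_cancel h'
    obtain ⟨tu, htu⟩ := hsu hlam
    set t : L := ((tu⁻¹ : Lˣ) : L) with ht
    have hslam_t : sharp lam * t = 1 := by
      rw [← htu, ht]
      exact_mod_cast tu.mul_inv
    set ε : L := mu * t with hε
    have hmu_eq : mu = ε * sharp lam := by
      rw [hε, mul_assoc, mul_comm t (sharp lam), hslam_t, mul_one]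
    have hεU : IsUnit ε := hmu.mul (Units.isUnit tu⁻¹)
    have hsε : sharp ε = ε := by
      have hA : sharp mu = sharp ε * (algebraMap F L (Algebra.norm F lam) * lam) := by
        rw [hmu_eq, hM hεU, hss hlam]
      have hB : mu * (lam * lam) = ε * (algebraMap F L (Algebra.norm F lam) * lam) := by
        rw [hmu_eq]
        linear_combination (ε * lam) * hsharp lam
      have hC : sharp ε * (algebraMap F L (Algebra.norm F lam) * lam)
          = ε * (algebraMap F L (Algebra.norm F lam) * lam) := by
        rw [← hA, hkey, hB]
      have hNl : IsUnit (algebraMap F L (Algebra.norm F lam) * lam) := (hNu hlam).mul hlam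
      apply hNl.mul_left_cancel
      linear_combination hC
    have heps2 : ε * ε = 1 := by
      have h1 := hsharp ε
      rw [hsε] at h1
      -- h1 : ε * ε = algebraMap (N ε)
      have hn3 : Algebra.norm F ε * Algebra.norm F ε = (Algebra.norm F ε) ^ 3 := by
        have h3 := congrArg (Algebra.norm F) h1
        rw [map_mul, Algebra.norm_algebraMap, hdim] at h3
        exact h3
      have hnz : Algebra.norm F ε ≠ 0 := (hεU.map (Algebra.norm F)).ne_zero
      have hone : Algebra.norm F ε = 1 := by
        have hsq : (Algebra.norm F ε)^2 ≠ 0 := pow_ne_zero 2 hnz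
        apply mul_left_cancel₀ hsq
        rw [mul_one]
        linear_combination - hn3
      rw [h1, hone, map_one]
    by_cases hε1 : ε = 1
    · rw [hmu_eq, hε1, one_mul]
    · exfalso
      have hεnotF : ∀ c : F, ε ≠ algebraMap F L c := by
        intro c hc
        have hsc : sharp (algebraMap F L c) = algebraMap F L (c * c) := by
          rw [Algebra.algebraMap_eq_smul_one (A := L) c, QuadraticMap.map_smul, hs1]
          rw [Algebra.algebraMap_eq_smul_one (A := L) (c * c)]
        have h4 : algebraMap F L c = algebraMap F L (c * c) := by
          rw [← hsc, ← hc, hsε, hc]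
        have h5 : c = c * c := hinj h4
        rcases mul_eq_zero.mp (show c * (c - 1) = 0 by linear_combination - h5) with h | h
        · exact hεU.ne_zero (by rw [hc, h, map_zero])
        · have : c = 1 := by linear_combination h
          exact hε1 (by rw [hc, this, map_one])
      have hP0 : ∀ v : V, polar Q v (β v) = 0 := by
        intro v
        obtain ⟨a, ha⟩ := hN v
        obtain ⟨bb, hbb⟩ := h3c v
        rw [polar_smul_right, smul_eq_mul, ha] at hbb
        -- hbb : mu * (lam * algebraMap a) = algebraMap bb
        have hml : mu * lam = ε * algebraMap F L (Algebra.norm F lam) := by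
          rw [hmu_eq]
          linear_combination ε * hsharp lam
        have hfin : ε * algebraMap F L (Algebra.norm F lam * a) = algebraMap F L bb := by
          rw [map_mul]
          linear_combination hbb - (algebraMap F L a) * hml
        by_cases haz : Algebra.norm F lam * a = 0
        · have hanz : a = 0 := by
            rcases mul_eq_zero.mp haz with h | h
            · exact absurd h (hlam.map (Algebra.norm F)).ne_zero
            · exact h
          rw [ha, hanz, map_zero]
        · exfalso
          apply hεnotF (bb * (Algebra.norm F lam * a)⁻¹)
          have h4 : algebraMap F L ((Algebra.norm F lam * a) * (Algebra.norm F lam * a)⁻¹) = 1 := by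
            rw [mul_inv_cancel₀ haz, map_one]
          calc ε = ε * algebraMap F L ((Algebra.norm F lam * a) * (Algebra.norm F lam * a)⁻¹) := by
                rw [h4, mul_one]
            _ = (ε * algebraMap F L (Algebra.norm F lam * a))
                * algebraMap F L ((Algebra.norm F lam * a)⁻¹) := by rw [map_mul]; ring
            _ = algebraMap F L bb * algebraMap F L ((Algebra.norm F lam * a)⁻¹) := by rw [hfin]
            _ = algebraMap F L (bb * (Algebra.norm F lam * a)⁻¹) := by rw [map_mul]
      -- build idempotent from ε
      have heps2' : ((1:L) + ε) * ((1:L) + ε) = (2:F) • ((1:L) + ε) := by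
        rw [two_smul]
        linear_combination heps2
      set eL : L := (2⁻¹ : F) • ((1:L) + ε) with heL
      have heeL : eL * eL = eL := by
        rw [heL, smul_mul_assoc, Algebra.mul_smul_comm, heps2', smul_smul, smul_smul]
        congr 1
        field_simp
      have heL0 : eL ≠ 0 := by
        intro h
        rw [heL] at h
        rcases smul_eq_zero.mp h with h' | h'
        · exact (inv_ne_zero h2) h'
        · have : ε = algebraMap F L (-1) := by
            rw [_root_.map_neg, _root_.map_one]
            linear_combination h'
          exact hεnotF (-1) this
      have heL1 : eL ≠ 1 := by
        intro h
        apply hε1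
        have h3 : (2:F) • eL = (2:F) • (1:L) := by rw [h]
        rw [heL, smul_smul] at h3
        have h4 : (2:F) * 2⁻¹ = 1 := by field_simp
        rw [h4, one_smul, two_smul] at h3
        exact add_left_cancel h3
      obtain ⟨g, hgg, hg1, hsg⟩ := tc_idem h2 sharp hsharp heeL heL0 heL1
      have hstar : ∀ v w : V, polar Q v (β w) = - polar Q w (polar (⇑β) v w) := by
        intro v w
        have hβadd : β (v + w) = β v + β w + polar (⇑β) v w := by
          simp only [QuadraticMap.polar]
          abel
        have hβsub : β (v + -w) = β v + β w - polar (⇑β) v w := by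
          have hd : polar (⇑β) v (-w) = β (v + -w) - β v - β (-w) := rfl
          rw [QuadraticMap.map_neg] at hd
          rw [polar_neg_right] at hd
          rw [neg_eq_iff_eq_neg] at hd
          rw [hd]
          abel
        have e1 := hP0 (v + w)
        rw [hβadd] at e1
        simp only [polar_add_left, polar_add_right] at e1
        rw [hP0 v, hP0 w] at e1
        have e2 := hP0 (v + -w)
        rw [hβsub] at e2
        simp only [polar_add_left, polar_neg_left, polar_add_right, polar_sub_right] at e2
        rw [hP0 v, hP0 w] at e2
        have hz := tc_two_cancel h2 (M := L)
          (show (polar Q v (β w) + polar Q w (polar (⇑β) v w))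
              + (polar Q v (β w) + polar Q w (polar (⇑β) v w)) = 0 by linear_combination e1 + e2)
        linear_combination hz
      have hb0 : ∀ w : V, ((1:L) - g) • β w = 0 := by
        intro w
        apply hQnd
        intro u'
        have hPg : ((1:L) - g) * polar Q u' (β w) = 0 := by
          have hg0 : ((1:L) - g) * g = 0 := by linear_combination - hgg
          have h5 := hstar u' (g • w)
          rw [hβ, hsg] at h5
          rw [polar_smul_right] at h5
          rw [polar_smul_left] at h5
          simp only [smul_eq_mul] at h5
          have h7 := congrArg (fun z => ((1:L) - g) * z) h5
          simp only [mul_neg, ← mul_assoc] at h7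
          rw [hg0, zero_mul, neg_zero] at h7
          have h8 : ((1:L) - g) * ((1:L) - g) = (1:L) - g := by linear_combination hgg
          rw [h8] at h7
          exact h7
        rw [polar_smul_left, smul_eq_mul, polar_comm (⇑Q) (β w) u']
        exact hPg
      have h9 : β v₀ = g • β v₀ := by
        have h10 := hb0 v₀
        rw [sub_smul, one_smul, sub_eq_zero] at h10
        exact h10
      have h11 : sharp (Q v₀) = g * sharp (Q v₀) := by
        have h12 : Q (β v₀) = Q (g • β v₀) := by rw [← h9]
        rw [QuadraticMap.map_smul, smul_eq_mul, hgg] at h12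
        rw [hQβ] at h12
        exact h12
      apply hg1
      have h14 : sharp (Q v₀) * ((1:L) - g) = sharp (Q v₀) * 0 := by
        rw [mul_zero]
        linear_combination h11
      have h15 := hsQv₀.mul_left_cancel h14
      linear_combination - h15
  · -- backward
    intro hmueq
    subst hmueq
    refine ⟨?_, ?_, ?_⟩
    · intro ℓ v
      rw [hβ, smul_smul, smul_smul, mul_comm]
    · intro v
      rw [QuadraticMap.map_smul, smul_eq_mul, hQβ, hM (hsu hlam), hss hlam]
      linear_combination (lam * sharp (Q v)) * hsharp lam
    · intro v
      obtain ⟨a, ha⟩ := hN v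
      refine ⟨Algebra.norm F lam * a, ?_⟩
      rw [polar_smul_right, smul_eq_mul, ha, map_mul]
      linear_combination (algebraMap F L a) * hsharp lam
end

section
/- Let C be a Cayley algebra over a field F and suppose C = K ⊕ Ku ⊕ Kv ⊕ K(uv) is the ℤ₂²-grading obtained from a quadratic étale subalgebra K by the Cayley–Dickson doubling process (with u ⊥ K, v ⊥ K ⊕ Ku, n(u), n(v) ≠ 0). Then the map μ : ℤ₂² → F^×/n(K^×) sending each nontrivial element t of the grading group to the class n(x)·n(K^×) for any anisotropic x in the homogeneous component of degree t is a well-defined group homomorphism. -/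
open QuadraticMap

lemma aux_conj_norm {F C : Type*} [Field F] [NonAssocRing C] [Module F C]
    (n : QuadraticForm F C) (h1 : n 1 = 1) (b : C) :
    n ((polar n b 1) • (1:C) - b) = n b := by
  set β := polar n b 1 with hβ
  have e : β • (1:C) - b = β • 1 + -b := sub_eq_add_neg _ _
  have hp : n (β • (1:C) + -b) = polar n (β • (1:C)) (-b) + n (β • (1:C)) + n (-b) := by
    simp [QuadraticMap.polar]; ring
  rw [e, hp, polar_smul_left, polar_neg_right, QuadraticMap.map_smul,
    QuadraticMap.map_neg, h1, polar_comm (⇑n) 1 b, ← hβ]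
  simp only [smul_eq_mul]
  ring

/-- Let `C = K ⊕ Ku ⊕ Kv ⊕ K(uv)` be the `ℤ₂²`-grading of a Cayley algebra
obtained from a quadratic étale subalgebra `K` by the Cayley–Dickson doubling
process.  Then the map `μ : ℤ₂² → F^×/n(K^×)` sending each element `t` of the
grading group to the class of `n(x)` for any anisotropic `x` in the component
of degree `t` is well defined (independent of the choice of `x`) and is a
group homomorphism. -/
theorem stmt_16 (F : Type*) [Field F] (C : Type*) [NonAssocRing C] [Module F C]
    [SMulCommClass F C C] [IsScalarTower F C C] [FiniteDimensional F C]
    (n : QuadraticForm F C) (hdim : Module.finrank F C = 8)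
    (hcomp : ∀ x y : C, n (x * y) = n x * n y)
    (hnd : ∀ x : C, (∀ y : C, polar n x y = 0) → x = 0)
    (K : Submodule F C) (hK1 : (1 : C) ∈ K)
    (hKmul : ∀ a ∈ K, ∀ b ∈ K, a * b ∈ K)
    (hKdim : Module.finrank F K = 2)
    (hKnd : ∀ x ∈ K, (∀ y ∈ K, polar n x y = 0) → x = 0)
    (u v : C)
    (hu : ∀ k ∈ K, polar n k u = 0) (hnu : n u ≠ 0)
    (hv : ∀ x ∈ K ⊔ Submodule.map (LinearMap.mulRight F u) K, polar n x v = 0)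
    (hnv : n v ≠ 0)
    (hsum : K ⊔ Submodule.map (LinearMap.mulRight F u) K ⊔
        Submodule.map (LinearMap.mulRight F v) K ⊔
        Submodule.map (LinearMap.mulRight F (u * v)) K = ⊤) :
    let Comp : ZMod 2 × ZMod 2 → Submodule F C := fun t =>
      if t = (0, 0) then K
      else if t = (1, 0) then Submodule.map (LinearMap.mulRight F u) K
      else if t = (0, 1) then Submodule.map (LinearMap.mulRight F v) K
      else Submodule.map (LinearMap.mulRight F (u * v)) K
    (∀ t : ZMod 2 × ZMod 2, ∀ x ∈ Comp t, ∀ y ∈ Comp t, n x ≠ 0 → n y ≠ 0 →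
      ∃ k ∈ K, n k ≠ 0 ∧ n x = n y * n k) ∧
    (∀ s t : ZMod 2 × ZMod 2, ∀ x ∈ Comp s, ∀ y ∈ Comp t, n x ≠ 0 → n y ≠ 0 →
      ∃ z ∈ Comp (s + t), n z ≠ 0 ∧ ∃ k ∈ K, n k ≠ 0 ∧ n x * n y = n z * n k) := by
  intro Comp
  have h1 : n 1 = 1 := by
    have h := hcomp u 1
    rw [mul_one] at h
    exact mul_left_cancel₀ hnu (h.symm.trans (mul_one (n u)).symm)
  set W : ZMod 2 × ZMod 2 → C := fun t =>
    if t = (0, 0) then 1 else if t = (1, 0) then u else if t = (0, 1) then v else u * v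
    with hW
  have hCW : ∀ t, Comp t = Submodule.map (LinearMap.mulRight F (W t)) K := by
    intro t
    simp only [Comp, W]
    split_ifs with h h h <;> try rfl
    ext z
    simp [Submodule.mem_map, LinearMap.mulRight_apply, mul_one]
  have hnW : ∀ t, n (W t) ≠ 0 := by
    intro t
    simp only [W]
    split_ifs with h h h
    · rw [h1]; exact one_ne_zero
    · exact hnu
    · exact hnv
    · rw [hcomp]; exact mul_ne_zero hnu hnv
  have hWmul : ∀ s t : ZMod 2 × ZMod 2,
      ∃ c : F, c ≠ 0 ∧ n (W s) * n (W t) = c ^ 2 * n (W (s + t)) := by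
    have hs4 : ∀ s : ZMod 2 × ZMod 2, s = (0,0) ∨ s = (1,0) ∨ s = (0,1) ∨ s = (1,1) := by
      decide
    intro s t
    rcases hs4 s with rfl|rfl|rfl|rfl <;> rcases hs4 t with rfl|rfl|rfl|rfl <;>
      first
      | (refine ⟨1, one_ne_zero, ?_⟩
         simp (config := { decide := true }) [W, hcomp, h1] <;> ring1)
      | (refine ⟨n u, hnu, ?_⟩
         simp (config := { decide := true }) [W, hcomp, h1] <;> ring1)
      | (refine ⟨n v, hnv, ?_⟩
         simp (config := { decide := true }) [W, hcomp, h1] <;> ring1)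
      | (refine ⟨n u * n v, mul_ne_zero hnu hnv, ?_⟩
         simp (config := { decide := true }) [W, hcomp, h1] <;> ring1)
  constructor
  · intro t x hx y hy hnx hny
    rw [hCW t] at hx hy
    obtain ⟨a, haK, rfl⟩ := hx
    obtain ⟨b, hbK, rfl⟩ := hy
    simp only [LinearMap.mulRight_apply, hcomp] at hnx hny ⊢
    have hna : n a ≠ 0 := fun h => hnx (by rw [h, zero_mul])
    have hnb : n b ≠ 0 := fun h => hny (by rw [h, zero_mul])
    refine ⟨(n b)⁻¹ • ((polar n b 1 • 1 - b) * a), ?_, ?_, ?_⟩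
    · exact Submodule.smul_mem _ _
        (hKmul _ (Submodule.sub_mem _ (Submodule.smul_mem _ _ hK1) hbK) _ haK)
    · rw [QuadraticMap.map_smul, hcomp, aux_conj_norm n h1, smul_eq_mul]
      exact mul_ne_zero (mul_ne_zero (inv_ne_zero hnb) (inv_ne_zero hnb))
        (mul_ne_zero hnb hna)
    · rw [QuadraticMap.map_smul, hcomp, aux_conj_norm n h1, smul_eq_mul]
      field_simp
  · intro s t x hx y hy hnx hny
    rw [hCW s] at hx
    rw [hCW t] at hy
    obtain ⟨a, haK, rfl⟩ := hx
    obtain ⟨b, hbK, rfl⟩ := hy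
    simp only [LinearMap.mulRight_apply, hcomp] at hnx hny ⊢
    have hna : n a ≠ 0 := fun h => hnx (by rw [h, zero_mul])
    have hnb : n b ≠ 0 := fun h => hny (by rw [h, zero_mul])
    obtain ⟨c, hc, hcc⟩ := hWmul s t
    refine ⟨W (s + t), ?_, hnW _, c • (a * b), Submodule.smul_mem _ _ (hKmul _ haK _ hbK),
      ?_, ?_⟩
    · rw [hCW (s + t)]
      exact ⟨1, hK1, by simp⟩
    · rw [QuadraticMap.map_smul, hcomp, smul_eq_mul]
      exact mul_ne_zero (mul_ne_zero hc hc) (mul_ne_zero hna hnb)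
    · rw [QuadraticMap.map_smul, hcomp, smul_eq_mul]
      linear_combination (n a * n b) * hcc
end
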